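/- arXiv:1304.6326 — 3 statements merged into one kernel-verified Lean document; each statement's English description precedes it below -/
import Mathlib

section
/- The infimum over p>0 of (1/Γ(p)) ∫₀^p u^{p-1} e^{-u} du is strictly positive and strictly less than 1. -/
open MeasureTheory Filter Set

lemma exp_key {t : ℝ} (h0 : 0 ≤ t) (h1 : t ≤ 2/3) : (2 - t) * Real.exp t ≤ 2 + t := by
  have h := Real.exp_bound' h0 (by linarith) (n := 4) (by norm_num)
  simp [Finset.sum_range_succ, Nat.factorial] at h
  have h2 : (2 - t) * Real.exp t ≤ (2 - t) * (1 + t + t ^ 2 / 2 + t ^ 3 / 6 + t ^ 4 * (4+1) / (24 * 4)) :=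
    mul_le_mul_of_nonneg_left h (by linarith)
  nlinarith [pow_nonneg h0 3, pow_nonneg h0 4, pow_nonneg h0 5]

lemma gamma_le_one {p : ℝ} (h1 : 1 ≤ p) (h2 : p ≤ 2) : Real.Gamma p ≤ 1 := by
  have hc := Real.convexOn_Gamma.2 (show (1:ℝ) ∈ Ioi 0 from mem_Ioi.2 one_pos)
    (show (2:ℝ) ∈ Ioi 0 from mem_Ioi.2 two_pos)
    (show (0:ℝ) ≤ 2 - p by linarith) (show (0:ℝ) ≤ p - 1 by linarith) (by ring)
  simp only [smul_eq_mul, Real.Gamma_one, Real.Gamma_two, mul_one] at hc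
  have h : 2 - p + (p - 1) * 2 = p := by ring
  rw [h] at hc
  linarith

lemma log_key {p : ℝ} (hp : 2 ≤ p) : 1 ≤ (p - 1/2) * Real.log (p / (p-1)) := by
  set t : ℝ := 2 / (2*p - 1) with ht
  have hden : (0:ℝ) < 2*p - 1 := by linarith
  have ht0 : 0 ≤ t := by positivity
  have ht1 : t ≤ 2/3 := by
    rw [ht, div_le_div_iff₀ hden (by norm_num)]; linarith
  have hk := exp_key ht0 ht1
  have h2t : 0 < 2 - t := by linarith
  have hratio : (2 + t) / (2 - t) = p / (p - 1) := by
    rw [ht]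
    rw [div_eq_div_iff (by positivity) (by linarith)]
    field_simp
    ring
  have hexp : Real.exp t ≤ p / (p - 1) := by
    rw [← hratio, le_div_iff₀ h2t]
    linarith [mul_comm (Real.exp t) (2 - t)]
  have hlog : t ≤ Real.log (p / (p-1)) :=
    (Real.le_log_iff_exp_le (div_pos (by linarith) (by linarith))).2 hexp
  have : (p - 1/2) * t = 1 := by
    rw [ht]; rw [mul_div_assoc', div_eq_one_iff_eq hden.ne']; ring
  calc (1:ℝ) = (p - 1/2) * t := this.symm
    _ ≤ (p - 1/2) * Real.log (p / (p-1)) :=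
        mul_le_mul_of_nonneg_left hlog (by linarith)

lemma stirling_ub {p : ℝ} (hp : 1 ≤ p) :
    Real.Gamma p ≤ Real.exp 2 * p ^ (p - 1/2) * Real.exp (-p) := by
  obtain ⟨n, hn⟩ : ∃ n : ℕ, p ≤ n + 2 := by
    obtain ⟨n, hn⟩ := exists_nat_ge p
    exact ⟨n, by push_cast; linarith⟩
  induction n generalizing p with
  | zero =>
      push_cast at hn
      have h1 : Real.Gamma p ≤ 1 := gamma_le_one hp (by linarith)
      have h2 : (1:ℝ) ≤ p ^ (p - 1/2) :=
        Real.one_le_rpow hp (by linarith)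
      have h3 : (1:ℝ) ≤ Real.exp 2 * Real.exp (-p) := by
        rw [← Real.exp_add]
        exact Real.one_le_exp (by linarith)
      calc Real.Gamma p ≤ 1 := h1
        _ ≤ (Real.exp 2 * Real.exp (-p)) * (p ^ (p - 1/2)) := by
            nlinarith
        _ = Real.exp 2 * p ^ (p - 1/2) * Real.exp (-p) := by ring
  | succ n ih =>
      by_cases h : p ≤ n + 2
      · exact ih hp h
      · push_neg at h
        have h2p : 2 < p := by
          have h0n : (0:ℝ) ≤ n := Nat.cast_nonneg n
          have : (2:ℝ) ≤ n + 2 := by linarith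
          linarith
        have hq0 : (0:ℝ) < p - 1 := by linarith
        have hq1 : (1:ℝ) ≤ p - 1 := by linarith
        have hqn : p - 1 ≤ n + 2 := by push_cast at hn ⊢; linarith
        have ihq := ih hq1 hqn
        have hGamma : Real.Gamma p = (p-1) * Real.Gamma (p-1) := by
          have := Real.Gamma_add_one (s := p - 1) hq0.ne'
          rw [sub_add_cancel] at this
          exact this
        have hstep : (p-1) * ((p-1) ^ (p - 1 - 1/2)) = (p-1) ^ (p - 1/2) := by
          nth_rewrite 1 [← Real.rpow_one (p-1)]
          rw [← Real.rpow_add hq0]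
          congr 1
          ring
        have hkey : (p-1) ^ (p - 1/2) * Real.exp (-(p-1)) ≤ p ^ (p - 1/2) * Real.exp (-p) := by
          rw [Real.rpow_def_of_pos hq0, Real.rpow_def_of_pos (by linarith : (0:ℝ) < p),
            ← Real.exp_add, ← Real.exp_add]
          apply Real.exp_le_exp.2
          have hl := log_key h2p.le
          rw [Real.log_div (by linarith) hq0.ne'] at hl
          nlinarith
        calc Real.Gamma p = (p-1) * Real.Gamma (p-1) := hGamma
          _ ≤ (p-1) * (Real.exp 2 * (p-1) ^ (p - 1 - 1/2) * Real.exp (-(p-1))) :=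
              mul_le_mul_of_nonneg_left ihq (by linarith)
          _ = Real.exp 2 * ((p-1) * (p-1) ^ (p - 1 - 1/2) * Real.exp (-(p-1))) := by ring
          _ = Real.exp 2 * ((p-1) ^ (p - 1/2) * Real.exp (-(p-1))) := by rw [hstep]
          _ ≤ Real.exp 2 * (p ^ (p - 1/2) * Real.exp (-p)) :=
              mul_le_mul_of_nonneg_left hkey (Real.exp_pos 2).le
          _ = Real.exp 2 * p ^ (p - 1/2) * Real.exp (-p) := by ring

-- Gamma as integral in our normal form
lemma gamma_int {s : ℝ} (hs : 0 < s) :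
    ∫ u in Ioi (0:ℝ), u ^ (s-1) * Real.exp (-u) = Real.Gamma s := by
  rw [Real.Gamma_eq_integral hs]
  exact setIntegral_congr_fun measurableSet_Ioi (fun x hx => mul_comm _ _)

lemma gamma_intble {s : ℝ} (hs : 0 < s) :
    IntegrableOn (fun u : ℝ => u ^ (s-1) * Real.exp (-u)) (Ioi 0) := by
  have := Real.GammaIntegral_convergent hs
  exact this.congr_fun (fun x hx => mul_comm _ _) measurableSet_Ioi

lemma contOn_w {q : ℝ} (hq : 0 ≤ q) (s : Set ℝ) :
    ContinuousOn (fun u : ℝ => u ^ q * Real.exp (-u)) s :=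
  fun x _ => ((Real.continuousAt_rpow_const x q (Or.inr hq)).mul
    ((Real.continuous_exp.comp continuous_neg).continuousAt)).continuousWithinAt

-- first moment identity
lemma I1_eq {p : ℝ} (hp : 1 ≤ p) :
    ∫ u in Ioo (0:ℝ) p, (p - u) * (u ^ (p-1) * Real.exp (-u)) = p ^ p * Real.exp (-p) := by
  have hp0 : (0:ℝ) < p := lt_of_lt_of_le one_pos hp
  have hderiv : ∀ x ∈ uIcc (0:ℝ) p, HasDerivAt (fun u : ℝ => u ^ p * Real.exp (-u))
      ((p - x) * (x ^ (p-1) * Real.exp (-x))) x := by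
    intro x hx
    rw [uIcc_of_le hp0.le] at hx
    have h1 : HasDerivAt (fun u : ℝ => u ^ p) (p * x ^ (p-1)) x :=
      Real.hasDerivAt_rpow_const (Or.inr hp)
    have h2 : HasDerivAt (fun u : ℝ => Real.exp (-u)) (-Real.exp (-x)) x := by
      simpa [Function.comp_def] using (Real.hasDerivAt_exp (-x)).comp x (hasDerivAt_neg x)
    have := h1.mul h2
    refine this.congr_deriv ?_
    have hxp : x ^ p = x * x ^ (p - 1) := by
      rcases eq_or_lt_of_le hx.1 with h | h
      · rw [← h, Real.zero_rpow hp0.ne']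
        simp
      · have : x ^ p = x ^ (1 + (p-1)) := by norm_num
        rw [this, Real.rpow_add h, Real.rpow_one]
    rw [hxp]; ring
  have hcont : IntervalIntegrable (fun u : ℝ => (p - u) * (u ^ (p-1) * Real.exp (-u)))
      volume 0 p := by
    apply ContinuousOn.intervalIntegrable
    rw [uIcc_of_le hp0.le]
    exact (continuousOn_const.sub continuousOn_id).mul (contOn_w (by linarith) _)
  have := intervalIntegral.integral_eq_sub_of_hasDerivAt hderiv hcont
  rw [intervalIntegral.integral_of_le hp0.le, integral_Ioc_eq_integral_Ioo] at this
  rw [this, Real.zero_rpow hp0.ne']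
  simp

lemma moment2 {p : ℝ} (hp : 0 < p) :
    IntegrableOn (fun u : ℝ => (p - u)^2 * (u ^ (p-1) * Real.exp (-u))) (Ioi 0) ∧
    ∫ u in Ioi (0:ℝ), (p - u)^2 * (u ^ (p-1) * Real.exp (-u)) = p * Real.Gamma p := by
  have h1 : IntegrableOn (fun u : ℝ => p^2 * (u ^ (p-1) * Real.exp (-u))) (Ioi 0) :=
    (gamma_intble hp).const_mul (p^2)
  have h2 : IntegrableOn (fun u : ℝ => 2*p * (u ^ (p+1-1) * Real.exp (-u))) (Ioi 0) :=
    (gamma_intble (by linarith : (0:ℝ) < p+1)).const_mul (2*p)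
  have h3 : IntegrableOn (fun u : ℝ => u ^ (p+2-1) * Real.exp (-u)) (Ioi 0) :=
    gamma_intble (by linarith : (0:ℝ) < p+2)
  have hFint : IntegrableOn (fun u : ℝ => p^2 * (u ^ (p-1) * Real.exp (-u))
      - 2*p * (u ^ (p+1-1) * Real.exp (-u)) + u ^ (p+2-1) * Real.exp (-u)) (Ioi 0) :=
    (h1.sub h2).add h3
  have heq : EqOn (fun u : ℝ => p^2 * (u ^ (p-1) * Real.exp (-u))
      - 2*p * (u ^ (p+1-1) * Real.exp (-u)) + u ^ (p+2-1) * Real.exp (-u))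
      (fun u : ℝ => (p - u)^2 * (u ^ (p-1) * Real.exp (-u))) (Ioi 0) := by
    intro u hu
    have hu0 : (0:ℝ) < u := hu
    have e1 : u ^ (p+1-1) = u * u ^ (p-1) := by
      rw [show p+1-1 = (1:ℝ)+(p-1) by ring, Real.rpow_add hu0, Real.rpow_one]
    have e2 : u ^ (p+2-1) = u^2 * u ^ (p-1) := by
      rw [show p+2-1 = (2:ℝ)+(p-1) by ring, Real.rpow_add hu0]
      norm_num
    simp only [e1, e2]
    ring
  constructor
  · exact hFint.congr_fun heq measurableSet_Ioi
  · rw [← setIntegral_congr_fun measurableSet_Ioi heq]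
    have h12 : IntegrableOn (fun u : ℝ => p^2 * (u ^ (p-1) * Real.exp (-u))
        - 2*p * (u ^ (p+1-1) * Real.exp (-u))) (Ioi 0) := h1.sub h2
    rw [integral_add h12 h3, integral_sub h1 h2,
      integral_const_mul, integral_const_mul,
      gamma_int hp, gamma_int (by linarith : (0:ℝ) < p+1),
      gamma_int (by linarith : (0:ℝ) < p+2)]
    have g1 : Real.Gamma (p+1) = p * Real.Gamma p := Real.Gamma_add_one hp.ne'
    have g2 : Real.Gamma (p+2) = (p+1) * Real.Gamma (p+1) := by
      have := Real.Gamma_add_one (s := p+1) (by linarith)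
      rw [show p+1+1 = p+2 by ring] at this
      exact this
    rw [g2, g1]
    ring

lemma f_lb_large {p : ℝ} (hp : 1 ≤ p) :
    Real.exp (-4) ≤ (1 / Real.Gamma p) * ∫ u in Ioo (0:ℝ) p, u ^ (p - 1) * Real.exp (-u) := by
  have hp0 : (0:ℝ) < p := lt_of_lt_of_le one_pos hp
  set G := Real.Gamma p with hGdef
  have hG : 0 < G := Real.Gamma_pos_of_pos hp0
  set s : ℝ := p ^ ((1:ℝ)/2) with hsdef
  have hs : 0 < s := Real.rpow_pos_of_pos hp0 _
  set lam : ℝ := Real.exp 2 / 2 * s with hlamdef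
  have hlam : 0 < lam := by positivity
  set γ := ∫ u in Ioo (0:ℝ) p, u ^ (p - 1) * Real.exp (-u) with hγdef
  -- integrability
  have hwint : IntegrableOn (fun u : ℝ => u ^ (p-1) * Real.exp (-u)) (Ioo 0 p) :=
    (gamma_intble hp0).mono_set Ioo_subset_Ioi_self
  have hJint : IntegrableOn (fun u : ℝ => (p - u)^2 * (u ^ (p-1) * Real.exp (-u))) (Ioo 0 p) :=
    (moment2 hp0).1.mono_set Ioo_subset_Ioi_self
  have hI1int : IntegrableOn (fun u : ℝ => (p - u) * (u ^ (p-1) * Real.exp (-u))) (Ioo 0 p) := by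
    have hc : ContinuousOn (fun u : ℝ => (p - u) * (u ^ (p-1) * Real.exp (-u))) (Icc 0 p) :=
      (continuousOn_const.sub continuousOn_id).mul (contOn_w (by linarith) _)
    exact (hc.integrableOn_Icc).mono_set Ioo_subset_Icc_self
  -- pointwise AM-GM bound
  have hpt : ∀ u ∈ Ioo (0:ℝ) p, (p - u) * (u ^ (p-1) * Real.exp (-u)) ≤
      lam * (u ^ (p-1) * Real.exp (-u)) + (1/(4*lam)) * ((p - u)^2 * (u ^ (p-1) * Real.exp (-u))) := by
    intro u hu
    have hu0 : 0 < u := hu.1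
    have hw0 : 0 ≤ u ^ (p-1) * Real.exp (-u) := by positivity
    have key : p - u ≤ lam + (p - u)^2 / (4*lam) := by
      rw [← sub_le_iff_le_add']
      rw [sub_le_iff_le_add, ← sub_le_iff_le_add', div_eq_mul_inv] at *
      have h4 : (0:ℝ) < 4*lam := by linarith
      rw [← sub_nonneg]
      have hins : 0 ≤ (p - u - 2*lam)^2 * (4*lam)⁻¹ := by positivity
      have hexpand : (p - u)^2 * (4*lam)⁻¹ - (p - u - lam) =
          (p - u - 2*lam)^2 * (4*lam)⁻¹ + (4*lam*lam - 4*lam*lam) * (4*lam)⁻¹ := by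
        field_simp
        ring
      nlinarith [hins, mul_pos (by norm_num : (0:ℝ) < 4) hlam]
    calc (p - u) * (u ^ (p-1) * Real.exp (-u))
        ≤ (lam + (p - u)^2 / (4*lam)) * (u ^ (p-1) * Real.exp (-u)) :=
          mul_le_mul_of_nonneg_right key hw0
      _ = lam * (u ^ (p-1) * Real.exp (-u)) + (1/(4*lam)) * ((p - u)^2 * (u ^ (p-1) * Real.exp (-u))) := by
          ring
  -- integrate the pointwise bound
  have hRint : IntegrableOn (fun u : ℝ => lam * (u ^ (p-1) * Real.exp (-u))
      + (1/(4*lam)) * ((p - u)^2 * (u ^ (p-1) * Real.exp (-u)))) (Ioo 0 p) :=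
    (hwint.const_mul lam).add (hJint.const_mul (1/(4*lam)))
  have hmono := setIntegral_mono_on hI1int hRint measurableSet_Ioo hpt
  have hsplit : ∫ u in Ioo (0:ℝ) p, (lam * (u ^ (p-1) * Real.exp (-u))
      + (1/(4*lam)) * ((p - u)^2 * (u ^ (p-1) * Real.exp (-u)))) =
      lam * γ + (1/(4*lam)) * ∫ u in Ioo (0:ℝ) p, (p - u)^2 * (u ^ (p-1) * Real.exp (-u)) := by
    rw [integral_add (hwint.const_mul lam) (hJint.const_mul (1/(4*lam))),
      integral_const_mul, integral_const_mul]
  -- second moment bound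
  have hJle : ∫ u in Ioo (0:ℝ) p, (p - u)^2 * (u ^ (p-1) * Real.exp (-u)) ≤ p * G := by
    rw [hGdef, ← (moment2 hp0).2]
    apply setIntegral_mono_set (moment2 hp0).1
    · refine (ae_restrict_iff' measurableSet_Ioi).2 (ae_of_all _ fun u hu => ?_)
      have hu0 : (0:ℝ) < u := hu
      positivity
    · exact (Ioo_subset_Ioi_self).eventuallyLE
  have hJ0 : 0 ≤ (1/(4*lam)) := by positivity
  have hmain : p ^ p * Real.exp (-p) ≤ lam * γ + (1/(4*lam)) * (p * G) := by
    rw [← I1_eq hp]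
    calc ∫ u in Ioo (0:ℝ) p, (p - u) * (u ^ (p-1) * Real.exp (-u))
        ≤ lam * γ + (1/(4*lam)) * ∫ u in Ioo (0:ℝ) p, (p - u)^2 * (u ^ (p-1) * Real.exp (-u)) := by
          rw [← hsplit]; exact hmono
      _ ≤ lam * γ + (1/(4*lam)) * (p * G) := by
          have := mul_le_mul_of_nonneg_left hJle hJ0
          linarith
  -- Stirling lower bound on p^p e^{-p}
  have hA : Real.exp (-2) * s * G ≤ p ^ p * Real.exp (-p) := by
    have h1 := stirling_ub hp
    have h2 : Real.exp (-2) * s * G ≤ Real.exp (-2) * s * (Real.exp 2 * p ^ (p - 1/2) * Real.exp (-p)) := by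
      rw [← hGdef] at *
      exact mul_le_mul_of_nonneg_left h1 (by positivity)
    have h3 : Real.exp (-2) * s * (Real.exp 2 * p ^ (p - 1/2) * Real.exp (-p)) =
        p ^ p * Real.exp (-p) := by
      rw [hsdef]
      rw [show Real.exp (-2) * p^((1:ℝ)/2) * (Real.exp 2 * p^(p-1/2) * Real.exp (-p)) =
        (Real.exp (-2) * Real.exp 2) * (p^((1:ℝ)/2) * p^(p-1/2)) * Real.exp (-p) from by ring,
        ← Real.rpow_add hp0, ← Real.exp_add]
      norm_num
    linarith
  -- identity for the second-moment term
  have hss : s * s = p := by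
    rw [hsdef, ← Real.rpow_add hp0]
    norm_num
  have hc : (1/(4*lam)) * (p * G) = Real.exp (-2) * s * G / 2 := by
    rw [hlamdef, ← hss, Real.exp_neg]
    field_simp
    ring
  have h2 : Real.exp (-2) * s * G / 2 ≤ lam * γ := by
    rw [hc] at hmain
    linarith
  have h3 : Real.exp (-4) * G * lam ≤ γ * lam := by
    have : Real.exp (-4) * G * lam = Real.exp (-2) * s * G / 2 := by
      rw [hlamdef, show (-4:ℝ) = -2 + -2 by norm_num, Real.exp_add, Real.exp_neg 2]
      field_simp
    rw [this]
    calc Real.exp (-2) * s * G / 2 ≤ lam * γ := h2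
      _ = γ * lam := mul_comm _ _
  have hγge : Real.exp (-4) * G ≤ γ := le_of_mul_le_mul_right h3 hlam
  rw [one_div, inv_mul_eq_div, le_div_iff₀ hG]
  linarith

lemma f_lb_small {p : ℝ} (h0 : 0 < p) (hp : p ≤ 1) :
    Real.exp (-2) ≤ (1 / Real.Gamma p) * ∫ u in Ioo (0:ℝ) p, u ^ (p - 1) * Real.exp (-u) := by
  have hG : 0 < Real.Gamma p := Real.Gamma_pos_of_pos h0
  -- Gamma p ≤ 1/p
  have hG1 : Real.Gamma p ≤ 1/p := by
    have h1 : Real.Gamma (p+1) ≤ 1 := gamma_le_one (by linarith) (by linarith)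
    rw [Real.Gamma_add_one h0.ne'] at h1
    rw [le_div_iff₀ h0]
    linarith [mul_comm p (Real.Gamma p)]
  have hinvG : p ≤ 1 / Real.Gamma p := by
    rw [le_div_iff₀ hG]
    calc p * Real.Gamma p ≤ p * (1/p) := mul_le_mul_of_nonneg_left hG1 h0.le
      _ = 1 := by field_simp
  -- lower bound for the integral
  have hwint : IntegrableOn (fun u : ℝ => u ^ (p-1) * Real.exp (-u)) (Ioo 0 p) :=
    (gamma_intble h0).mono_set Ioo_subset_Ioi_self
  have hrint : IntegrableOn (fun u : ℝ => u ^ (p-1) * Real.exp (-p)) (Ioo 0 p) := by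
    have h := intervalIntegral.intervalIntegrable_rpow' (a := 0) (b := p) (r := p-1)
      (by linarith)
    rw [intervalIntegrable_iff_integrableOn_Ioo_of_le h0.le] at h
    exact h.mul_const _
  have hle : ∫ u in Ioo (0:ℝ) p, u ^ (p-1) * Real.exp (-p) ≤
      ∫ u in Ioo (0:ℝ) p, u ^ (p-1) * Real.exp (-u) := by
    apply setIntegral_mono_on hrint hwint measurableSet_Ioo
    intro u hu
    have hu0 : 0 < u := hu.1
    have : Real.exp (-p) ≤ Real.exp (-u) := Real.exp_le_exp.2 (by linarith [hu.2])
    exact mul_le_mul_of_nonneg_left this (by positivity)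
  have hval : ∫ u in Ioo (0:ℝ) p, u ^ (p-1) * Real.exp (-p) = p ^ p / p * Real.exp (-p) := by
    rw [integral_mul_const]
    congr 1
    rw [← integral_Ioc_eq_integral_Ioo, ← intervalIntegral.integral_of_le h0.le]
    rw [integral_rpow (Or.inl (by linarith))]
    rw [Real.zero_rpow (by linarith : p - 1 + 1 ≠ 0)]
    rw [show p - 1 + 1 = p by ring]
    ring
  have hInt0 : 0 ≤ ∫ u in Ioo (0:ℝ) p, u ^ (p-1) * Real.exp (-u) := by
    apply setIntegral_nonneg measurableSet_Ioo
    intro u hu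
    have hu0 : 0 < u := hu.1
    positivity
  -- combine
  have hchain : p * (p ^ p / p * Real.exp (-p)) ≤
      (1 / Real.Gamma p) * ∫ u in Ioo (0:ℝ) p, u ^ (p-1) * Real.exp (-u) := by
    calc p * (p ^ p / p * Real.exp (-p))
        ≤ p * ∫ u in Ioo (0:ℝ) p, u ^ (p-1) * Real.exp (-u) := by
          apply mul_le_mul_of_nonneg_left _ h0.le
          rw [← hval]; exact hle
      _ ≤ (1 / Real.Gamma p) * ∫ u in Ioo (0:ℝ) p, u ^ (p-1) * Real.exp (-u) :=
          mul_le_mul_of_nonneg_right hinvG hInt0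
  have hsimp : p * (p ^ p / p * Real.exp (-p)) = p ^ p * Real.exp (-p) := by
    field_simp
  -- p^p * exp(-p) ≥ exp(-2)
  have hlogp : 1 - 1/p ≤ Real.log p := by
    have := Real.log_le_sub_one_of_pos (show (0:ℝ) < 1/p by positivity)
    rw [Real.log_div one_ne_zero h0.ne', Real.log_one] at this
    linarith
  have hplogp : p - 1 ≤ p * Real.log p := by
    have := mul_le_mul_of_nonneg_left hlogp h0.le
    calc p - 1 = p * (1 - 1/p) := by field_simp
      _ ≤ p * Real.log p := this
  have hfinal : Real.exp (-2) ≤ p ^ p * Real.exp (-p) := by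
    rw [Real.rpow_def_of_pos h0, ← Real.exp_add]
    apply Real.exp_le_exp.2
    nlinarith
  linarith [hchain, hsimp.symm.trans_le hchain]

lemma f_at_one :
    (1 / Real.Gamma 1) * ∫ u in Ioo (0:ℝ) 1, u ^ ((1:ℝ) - 1) * Real.exp (-u) =
      1 - Real.exp (-1) := by
  rw [Real.Gamma_one]
  have : ∀ u : ℝ, u ^ ((1:ℝ) - 1) * Real.exp (-u) = Real.exp (-u) := by
    intro u
    norm_num [Real.rpow_zero]
  simp_rw [this]
  rw [← integral_Ioc_eq_integral_Ioo, ← intervalIntegral.integral_of_le zero_le_one]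
  rw [intervalIntegral.integral_comp_neg (fun x => Real.exp x)]
  rw [integral_exp]
  norm_num

/-- The infimum over p>0 of P{Gamma(p,1) ≤ p} = (1/Γ(p)) ∫₀^p u^{p-1}e^{-u} du is
strictly between 0 and 1. -/
theorem gamma_prob_inf_pos_lt_one :
    0 < sInf ((fun p : ℝ =>
        (1 / Real.Gamma p) * ∫ u in Ioo (0:ℝ) p, u ^ (p - 1) * Real.exp (-u)) '' Ioi 0) ∧
    sInf ((fun p : ℝ =>
        (1 / Real.Gamma p) * ∫ u in Ioo (0:ℝ) p, u ^ (p - 1) * Real.exp (-u)) '' Ioi 0) < 1 := by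
  set S := ((fun p : ℝ =>
      (1 / Real.Gamma p) * ∫ u in Ioo (0:ℝ) p, u ^ (p - 1) * Real.exp (-u)) '' Ioi 0) with hS
  have hmem : (1 - Real.exp (-1)) ∈ S := ⟨1, mem_Ioi.2 one_pos, f_at_one⟩
  have hlb : ∀ y ∈ S, Real.exp (-4) ≤ y := by
    rintro y ⟨p, hp, rfl⟩
    have hp0 : (0:ℝ) < p := hp
    rcases le_or_gt p 1 with h | h
    · calc Real.exp (-4) ≤ Real.exp (-2) := Real.exp_le_exp.2 (by norm_num)
        _ ≤ _ := f_lb_small hp0 h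
    · exact f_lb_large h.le
  have hbdd : BddBelow S := ⟨Real.exp (-4), fun y hy => hlb y hy⟩
  constructor
  · exact lt_of_lt_of_le (Real.exp_pos _) (le_csInf ⟨_, hmem⟩ hlb)
  · exact lt_of_le_of_lt (csInf_le hbdd hmem) (by linarith [Real.exp_pos (-1:ℝ)])
end

section
/- Let κ_j > 0 for j = 2,3,4 satisfy κ₃² < κ₂κ₄, and let p ≥ -1 satisfy (p+4)/(p+3) < κ₂κ₄/κ₃². Define s = κ₄/((p+4)κ₃) and m = κ₃/(Γ(p+4) s^{p+4}), and let γ_j = Γ(j+p+1) m s^{j+p+1} for j ≥ 2. Then γ₃ = κ₃, γ₄ = κ₄, and γ₂ = (p+4)κ₃²/((p+3)κ₄) < κ₂. -/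
/-- Fourth-order cumulant matching: with s = κ₄/((p+4)κ₃), m = κ₃/(Γ(p+4) s^{p+4}) and
γ_j = Γ(j+p+1) m s^{j+p+1}, one has γ₃ = κ₃, γ₄ = κ₄ and
γ₂ = (p+4)κ₃²/((p+3)κ₄) < κ₂. -/
theorem fourth_order_cumulant_matching
    (κ₂ κ₃ κ₄ p : ℝ) (h2 : 0 < κ₂) (h3 : 0 < κ₃) (h4 : 0 < κ₄)
    (hCS : κ₃ ^ 2 < κ₂ * κ₄)
    (hp : -1 ≤ p) (hpq : (p + 4) / (p + 3) < κ₂ * κ₄ / κ₃ ^ 2)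
    (s m : ℝ) (hs : s = κ₄ / ((p + 4) * κ₃))
    (hm : m = κ₃ / (Real.Gamma (p + 4) * s ^ (p + 4)))
    (γ : ℝ → ℝ) (hγ : ∀ j : ℝ, γ j = Real.Gamma (j + p + 1) * m * s ^ (j + p + 1)) :
    γ 3 = κ₃ ∧ γ 4 = κ₄ ∧ γ 2 = (p + 4) * κ₃ ^ 2 / ((p + 3) * κ₄) ∧ γ 2 < κ₂ := by
  have hp4 : (0:ℝ) < p + 4 := by linarith
  have hp3 : (0:ℝ) < p + 3 := by linarith
  have hspos : 0 < s := by
    rw [hs]; positivity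
  have hG4 : 0 < Real.Gamma (p + 4) := Real.Gamma_pos_of_pos hp4
  have hrp : 0 < s ^ (p + 4) := Real.rpow_pos_of_pos hspos _
  -- γ 3
  have e3 : (3:ℝ) + p + 1 = p + 4 := by ring
  have g3 : γ 3 = κ₃ := by
    rw [hγ 3, e3, hm]
    field_simp
  -- s^(p+5) = s^(p+4) * s
  have spow5 : s ^ (p + 5) = s ^ (p + 4) * s := by
    rw [show p + 5 = (p + 4) + 1 by ring, Real.rpow_add hspos, Real.rpow_one]
  have spow3 : s ^ (p + 4) = s ^ (p + 3) * s := by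
    rw [show p + 4 = (p + 3) + 1 by ring, Real.rpow_add hspos, Real.rpow_one]
  have G5 : Real.Gamma (p + 5) = (p + 4) * Real.Gamma (p + 4) := by
    rw [show p + 5 = (p + 4) + 1 by ring, Real.Gamma_add_one (ne_of_gt hp4)]
  have G4' : Real.Gamma (p + 4) = (p + 3) * Real.Gamma (p + 3) := by
    rw [show p + 4 = (p + 3) + 1 by ring, Real.Gamma_add_one (ne_of_gt hp3)]
  have g4 : γ 4 = κ₄ := by
    have : γ 4 = (p + 4) * κ₃ * s := by
      rw [hγ 4, show (4:ℝ) + p + 1 = p + 5 by ring, spow5, G5, hm]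
      field_simp
    rw [this, hs]
    field_simp
  have g2 : γ 2 = (p + 4) * κ₃ ^ 2 / ((p + 3) * κ₄) := by
    have hkey : γ 2 = κ₃ / ((p + 3) * s) := by
      rw [hγ 2, show (2:ℝ) + p + 1 = p + 3 by ring, hm, G4', spow3]
      have hG3 : 0 < Real.Gamma (p + 3) := Real.Gamma_pos_of_pos hp3
      have hrp3 : 0 < s ^ (p + 3) := Real.rpow_pos_of_pos hspos _
      field_simp
    rw [hkey, hs]
    rw [div_eq_div_iff (by positivity) (by positivity)]
    field_simp
  refine ⟨g3, g4, g2, ?_⟩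
  rw [g2]
  rw [div_lt_iff₀ (by positivity)]
  rw [div_lt_div_iff₀ hp3 (by positivity)] at hpq
  nlinarith [sq_nonneg κ₃, mul_pos hp3 h4]
end

section
/- Let ξ be an infinitely divisible real random variable with characteristic exponent Ψ(t) = ∫ (1 + itu - e^{itu}) ν(du), where ν is a measure with finite moments of all orders ≥ 2 and ∫u²dν < ∞. Let Z ~ N(0, ε²) with ε > 0 be independent of ξ. Then the characteristic function of ξ + Z is a Schwartz function on ℝ. -/
open MeasureTheory

namespace CFGaux

noncomputable def Fn : ℕ → ℝ → ℝ → ℂ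
  | 0, t, u => 1 + Complex.I * t * u - Complex.exp (Complex.I * t * u)
  | 1, t, u => Complex.I * u * (1 - Complex.exp (Complex.I * t * u))
  | (n+2), t, u => -(Complex.I * u) ^ (n + 2) * Complex.exp (Complex.I * t * u)

lemma hasDerivAt_coe (t : ℝ) : HasDerivAt (fun t : ℝ => (t : ℂ)) 1 t := by
  exact Complex.ofRealCLM.hasDerivAt

lemma hasDerivAt_cexp_aux (u t : ℝ) :
    HasDerivAt (fun t : ℝ => Complex.exp (Complex.I * t * u))
      (Complex.I * u * Complex.exp (Complex.I * t * u)) t := by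
  have h1 : HasDerivAt (fun t : ℝ => Complex.I * (t : ℂ) * u) (Complex.I * u) t := by
    have := ((hasDerivAt_coe t).const_mul (Complex.I * (u : ℂ)))
    convert this using 1
    · rfl
    · funext s; ring
    · ring
  simpa [mul_comm] using h1.cexp

lemma hasDerivAt_Fn (n : ℕ) (t u : ℝ) :
    HasDerivAt (fun t => Fn n t u) (Fn (n+1) t u) t := by
  have hexp := hasDerivAt_cexp_aux u t
  match n with
  | 0 =>
      have h1 : HasDerivAt (fun t : ℝ => 1 + Complex.I * (t : ℂ) * u) (Complex.I * u) t := by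
        have := ((hasDerivAt_coe t).const_mul (Complex.I * (u : ℂ))).const_add 1
        convert this using 1
        · rfl
        · funext s; ring
        · ring
      have := h1.sub hexp
      convert this using 1
      rfl
      rfl
      simp [Fn]; ring
  | 1 =>
      have := ((hasDerivAt_const t (1:ℂ)).sub hexp).const_mul (Complex.I * (u:ℂ))
      convert this using 1
      rfl
      rfl
      simp [Fn]; ring
  | (m+2) =>
      have := hexp.const_mul (-(Complex.I * (u:ℂ)) ^ (m + 2))
      convert this using 1
      rfl
      rfl
      simp [Fn, pow_succ]; ring

end CFGaux

namespace CFGaux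

lemma norm_exp_Itu (t u : ℝ) : ‖Complex.exp (Complex.I * t * u)‖ = 1 := by
  rw [Complex.norm_exp]
  simp [Complex.mul_re]

lemma abs_Itu (t u : ℝ) : ‖Complex.I * t * u‖ = |t| * |u| := by
  simp [map_mul]

lemma norm_exp_sub_one_le (t u : ℝ) :
    ‖Complex.exp (Complex.I * t * u) - 1‖ ≤ 2 * (|t| * |u|) := by
  by_cases h : |t| * |u| ≤ 1
  · have := Complex.norm_exp_sub_one_le (x := Complex.I * t * u) (by rw [abs_Itu]; exact h)
    rw [abs_Itu] at this
    exact this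
  · push_neg at h
    calc ‖Complex.exp (Complex.I * t * u) - 1‖
        ≤ ‖Complex.exp (Complex.I * t * u)‖ + ‖(1:ℂ)‖ := norm_sub_le _ _
      _ = 2 := by rw [norm_exp_Itu]; norm_num
      _ ≤ 2 * (|t| * |u|) := by nlinarith

lemma norm_Fn0_le (t u : ℝ) : ‖Fn 0 t u‖ ≤ 3 * |t|^2 * |u|^2 := by
  have habs : ‖Complex.I * t * u‖ = |t| * |u| := abs_Itu t u
  have hFn : Fn 0 t u = -(Complex.exp (Complex.I * t * u) - 1 - Complex.I * t * u) := by
    simp [Fn]; ring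
  rw [hFn, norm_neg]
  by_cases h : |t| * |u| ≤ 1
  · have := Complex.norm_exp_sub_one_sub_id_le (x := Complex.I * t * u) (by rw [habs]; exact h)
    rw [habs] at this
    calc ‖Complex.exp (Complex.I * t * u) - 1 - Complex.I * t * u‖
        ≤ (|t| * |u|)^2 := this
      _ ≤ 3 * |t|^2 * |u|^2 := by nlinarith [sq_nonneg (|t| * |u|)]
  · push_neg at h
    have h1 : (0:ℝ) ≤ |t| * |u| := by positivity
    calc ‖Complex.exp (Complex.I * t * u) - 1 - Complex.I * t * u‖
        ≤ ‖Complex.exp (Complex.I * t * u) - 1‖ + ‖Complex.I * (t:ℂ) * u‖ := norm_sub_le _ _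
      _ ≤ 2 * (|t| * |u|) + |t| * |u| := by
          refine add_le_add (norm_exp_sub_one_le t u) ?_
          rw [habs]
      _ = 3 * (|t| * |u|) := by ring
      _ ≤ 3 * |t|^2 * |u|^2 := by nlinarith
  
lemma norm_Fn1_le (t u : ℝ) : ‖Fn 1 t u‖ ≤ 2 * |t| * |u|^2 := by
  have : Fn 1 t u = Complex.I * u * -(Complex.exp (Complex.I * t * u) - 1) := by
    show Complex.I * (u:ℂ) * (1 - Complex.exp (Complex.I * t * u)) = _
    ring
  rw [this, norm_mul, norm_neg]
  have h1 : ‖Complex.I * (u:ℂ)‖ = |u| := by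
    simp [map_mul]
  rw [h1]
  calc |u| * ‖Complex.exp (Complex.I * t * u) - 1‖
      ≤ |u| * (2 * (|t| * |u|)) :=
        mul_le_mul_of_nonneg_left (norm_exp_sub_one_le t u) (abs_nonneg u)
    _ = 2 * |t| * |u|^2 := by ring

lemma norm_Fn2 (n : ℕ) (t u : ℝ) : ‖Fn (n+2) t u‖ = |u|^(n+2) := by
  show ‖-(Complex.I * u) ^ (n + 2) * Complex.exp (Complex.I * t * u)‖ = _
  rw [norm_mul, norm_exp_Itu, mul_one, norm_neg, norm_pow]
  congr 1
  simp [map_mul]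

end CFGaux

namespace CFGaux

lemma continuous_Fn (n : ℕ) (t : ℝ) : Continuous (fun u => Fn n t u) := by
  have hexp : Continuous (fun u : ℝ => Complex.exp (Complex.I * t * u)) := by fun_prop
  match n with
  | 0 =>
      show Continuous (fun u : ℝ => 1 + Complex.I * (t:ℂ) * u - Complex.exp (Complex.I * t * u))
      fun_prop
  | 1 => show Continuous (fun u : ℝ => Complex.I * (u:ℂ) * (1 - Complex.exp (Complex.I * t * u)))
         fun_prop
  | (m+2) =>
      show Continuous (fun u : ℝ => -(Complex.I * (u:ℂ)) ^ (m+2) * Complex.exp (Complex.I * t * u))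
      fun_prop

lemma pow_le_aux (u : ℝ) {a b : ℕ} (h2 : 2 ≤ a) (hab : a ≤ b) : |u|^a ≤ |u|^2 + |u|^b := by
  rcases le_or_gt |u| 1 with h | h
  · have : |u|^a ≤ |u|^2 := pow_le_pow_of_le_one (abs_nonneg u) h h2
    nlinarith [pow_nonneg (abs_nonneg u) b]
  · have : |u|^a ≤ |u|^b := pow_le_pow_right₀ h.le hab
    nlinarith [pow_nonneg (abs_nonneg u) 2]

variable {ν : Measure ℝ}

section

variable (hmom : ∀ j : ℕ, 2 ≤ j → Integrable (fun u : ℝ => |u| ^ j) ν)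
include hmom

lemma integrable_Fn (n : ℕ) (t : ℝ) : Integrable (fun u => Fn n t u) ν := by
  match n with
  | 0 =>
      refine (((hmom 2 le_rfl).const_mul (3 * |t|^2)).mono'
        ((continuous_Fn 0 t).aestronglyMeasurable) ?_)
      filter_upwards with u
      simpa [mul_assoc] using norm_Fn0_le t u
  | 1 =>
      refine (((hmom 2 le_rfl).const_mul (2 * |t|)).mono'
        ((continuous_Fn 1 t).aestronglyMeasurable) ?_)
      filter_upwards with u
      simpa [mul_assoc] using norm_Fn1_le t u
  | (m+2) =>
      refine ((hmom (m+2) (by omega)).mono'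
        ((continuous_Fn (m+2) t).aestronglyMeasurable) ?_)
      filter_upwards with u
      exact (norm_Fn2 m t u).le

end

noncomputable def Psi (ν : Measure ℝ) (n : ℕ) (t : ℝ) : ℂ := ∫ u, Fn n t u ∂ν

end CFGaux

namespace CFGaux

variable {ν : Measure ℝ}

lemma hasDerivAt_Psi (hmom : ∀ j : ℕ, 2 ≤ j → Integrable (fun u : ℝ => |u| ^ j) ν)
    (n : ℕ) (t₀ : ℝ) : HasDerivAt (Psi ν n) (Psi ν (n+1) t₀) t₀ := by
  set C : ℝ := 2 * (|t₀| + 1) + 1 with hC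
  have hC1 : 1 ≤ C := by have := abs_nonneg t₀; rw [hC]; linarith
  have hball : ∀ t ∈ Metric.ball t₀ 1, |t| ≤ |t₀| + 1 := by
    intro t ht
    rw [Metric.mem_ball, Real.dist_eq] at ht
    have := abs_sub_abs_le_abs_sub t t₀
    linarith
  have key := hasDerivAt_integral_of_dominated_loc_of_deriv_le (μ := ν)
      (F := fun t u => Fn n t u) (F' := fun t u => Fn (n+1) t u)
      (bound := fun u => C * (|u|^2 + |u|^(n+2))) (Metric.ball_mem_nhds t₀ one_pos)
      (Filter.Eventually.of_forall fun t => (continuous_Fn n t).aestronglyMeasurable)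
      (integrable_Fn hmom n t₀)
      ((continuous_Fn (n+1) t₀).aestronglyMeasurable)
      ?_ ?_ ?_
  · exact key.2
  · filter_upwards with u
    intro t ht
    have hb := hball t ht
    match n with
    | 0 =>
        calc ‖Fn 1 t u‖ ≤ 2 * |t| * |u|^2 := norm_Fn1_le t u
          _ ≤ C * (|u|^2 + |u|^(0+2)) := by
              have h2 : (0:ℝ) ≤ |u|^2 := by positivity
              have h4 : 2 * |t| ≤ C := by rw [hC]; linarith
              have h5 : 2 * |t| * |u|^2 ≤ C * |u|^2 := mul_le_mul_of_nonneg_right h4 h2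
              have h6 : |u|^(0+2) = |u|^2 := by norm_num
              rw [h6]
              nlinarith
    | (m+1) =>
        calc ‖Fn (m+2) t u‖ = |u|^(m+2) := norm_Fn2 m t u
          _ ≤ |u|^2 + |u|^(m+3) := pow_le_aux u (by omega) (by omega)
          _ ≤ C * (|u|^2 + |u|^(m+1+2)) := by
              have h2 : (0:ℝ) ≤ |u|^2 + |u|^(m+3) := by positivity
              nlinarith
  · exact ((hmom 2 le_rfl).add (hmom (n+2) (by omega))).const_mul C
  · filter_upwards with u
    intro t _
    exact hasDerivAt_Fn n t u

lemma iteratedDeriv_Psi (hmom : ∀ j : ℕ, 2 ≤ j → Integrable (fun u : ℝ => |u| ^ j) ν)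
    (m n : ℕ) : iteratedDeriv n (Psi ν m) = Psi ν (m + n) := by
  induction n with
  | zero => simp
  | succ k ih =>
      rw [iteratedDeriv_succ, ih]
      funext t
      exact (hasDerivAt_Psi hmom (m+k) t).deriv

open scoped ContDiff in
lemma contDiff_Psi (hmom : ∀ j : ℕ, 2 ≤ j → Integrable (fun u : ℝ => |u| ^ j) ν)
    (m : ℕ) : ContDiff ℝ ∞ (Psi ν m) := by
  apply contDiff_of_differentiable_iteratedDeriv (n := (⊤ : ℕ∞))
  intro k _
  rw [iteratedDeriv_Psi hmom m k]
  exact fun t => (hasDerivAt_Psi hmom (m+k) t).differentiableAt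

end CFGaux

namespace CFGaux

variable {ν : Measure ℝ}

lemma one_add_abs_sq_bounds (t : ℝ) : |t| ≤ (1 + |t|)^2 ∧ |t|^2 ≤ (1 + |t|)^2 ∧ (1:ℝ) ≤ (1 + |t|)^2 := by
  have := abs_nonneg t
  refine ⟨by nlinarith, by nlinarith, by nlinarith⟩

lemma norm_Psi_le (hmom : ∀ j : ℕ, 2 ≤ j → Integrable (fun u : ℝ => |u| ^ j) ν)
    (n : ℕ) : ∃ C : ℝ, 0 ≤ C ∧ ∀ t, ‖Psi ν n t‖ ≤ C * (1 + |t|)^2 := by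
  have hM2 : (0:ℝ) ≤ ∫ u, |u|^2 ∂ν := integral_nonneg fun u => by positivity
  have ht1 : ∀ t : ℝ, |t| ≤ (1 + |t|)^2 := fun t => (one_add_abs_sq_bounds t).1
  have ht2 : ∀ t : ℝ, |t|^2 ≤ (1 + |t|)^2 := fun t => (one_add_abs_sq_bounds t).2.1
  have ht3 : ∀ t : ℝ, (1:ℝ) ≤ (1 + |t|)^2 := fun t => (one_add_abs_sq_bounds t).2.2
  match n with
  | 0 =>
      refine ⟨3 * ∫ u, |u|^2 ∂ν, by positivity, fun t => ?_⟩
      calc ‖Psi ν 0 t‖ ≤ ∫ u, 3 * |t|^2 * |u|^2 ∂ν := by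
            refine norm_integral_le_of_norm_le (((hmom 2 le_rfl).const_mul _)) ?_
            filter_upwards with u
            exact norm_Fn0_le t u
        _ = 3 * |t|^2 * ∫ u, |u|^2 ∂ν := integral_const_mul _ _
        _ ≤ 3 * (∫ u, |u|^2 ∂ν) * (1 + |t|)^2 := by nlinarith [ht2 t]
  | 1 =>
      refine ⟨2 * ∫ u, |u|^2 ∂ν, by positivity, fun t => ?_⟩
      calc ‖Psi ν 1 t‖ ≤ ∫ u, 2 * |t| * |u|^2 ∂ν := by
            refine norm_integral_le_of_norm_le (((hmom 2 le_rfl).const_mul _)) ?_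
            filter_upwards with u
            exact norm_Fn1_le t u
        _ = 2 * |t| * ∫ u, |u|^2 ∂ν := integral_const_mul _ _
        _ ≤ 2 * (∫ u, |u|^2 ∂ν) * (1 + |t|)^2 := by nlinarith [ht1 t]
  | (m+2) =>
      have hMn : (0:ℝ) ≤ ∫ u, |u|^(m+2) ∂ν := integral_nonneg fun u => by positivity
      refine ⟨∫ u, |u|^(m+2) ∂ν, hMn, fun t => ?_⟩
      calc ‖Psi ν (m+2) t‖ ≤ ∫ u, |u|^(m+2) ∂ν := by
            refine norm_integral_le_of_norm_le (hmom (m+2) (by omega)) ?_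
            filter_upwards with u
            exact (norm_Fn2 m t u).le
        _ ≤ (∫ u, |u|^(m+2) ∂ν) * (1 + |t|)^2 := by nlinarith [ht3 t]

lemma re_Psi0_nonneg (hmom : ∀ j : ℕ, 2 ≤ j → Integrable (fun u : ℝ => |u| ^ j) ν)
    (t : ℝ) : 0 ≤ (Psi ν 0 t).re := by
  have := integral_re (μ := ν) (f := fun u => Fn 0 t u) (integrable_Fn hmom 0 t)
  show (0:ℝ) ≤ RCLike.re (Psi ν 0 t)
  rw [show Psi ν 0 t = ∫ (x : ℝ), (fun u => Fn 0 t u) x ∂ν from rfl, ← this]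
  refine integral_nonneg fun u => ?_
  have h1 : (Fn 0 t u).re = 1 - (Complex.exp (Complex.I * t * u)).re := by
    show (1 + Complex.I * (t:ℂ) * u - Complex.exp (Complex.I * t * u)).re = _
    simp [Complex.add_re, Complex.sub_re, Complex.mul_re]
  have h2 : (Complex.exp (Complex.I * t * u)).re ≤ 1 := by
    have := Complex.re_le_norm (Complex.exp (Complex.I * t * u))
    rw [norm_exp_Itu] at this
    exact this
  show (0:ℝ) ≤ RCLike.re (Fn 0 t u)
  rw [RCLike.re_to_complex, h1]
  linarith

end CFGaux

namespace CFGaux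

open scoped ContDiff

noncomputable def gFun (ν : Measure ℝ) (ε : ℝ) (t : ℝ) : ℂ :=
  -(Psi ν 0 t) - (ε:ℂ)^2 * (t:ℂ)^2/2

noncomputable def fFun (ν : Measure ℝ) (ε : ℝ) (t : ℝ) : ℂ := Complex.exp (gFun ν ε t)

noncomputable def GFun (ν : Measure ℝ) (ε : ℝ) : ℕ → ℝ → ℂ
  | 0, t => -(Psi ν 1 t) - (ε:ℂ)^2 * t
  | 1, t => -(Psi ν 2 t) - (ε:ℂ)^2
  | (i+2), t => -(Psi ν (i+3) t)

variable {ν : Measure ℝ} (ε : ℝ)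

lemma contDiff_coe : ContDiff ℝ ∞ (fun t : ℝ => (t : ℂ)) := Complex.ofRealCLM.contDiff

lemma hasDerivAt_quad (t : ℝ) :
    HasDerivAt (fun t : ℝ => (ε:ℂ)^2 * (t:ℂ)^2/2) ((ε:ℂ)^2 * t) t := by
  have h0 := hasDerivAt_coe t
  have := ((h0.mul h0).const_mul ((ε:ℂ)^2)).div_const 2
  convert this using 1
  · rfl
  · funext s; simp only [Pi.mul_apply]; ring
  · ring

variable (hmom : ∀ j : ℕ, 2 ≤ j → Integrable (fun u : ℝ => |u| ^ j) ν)
include hmom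

lemma hasDerivAt_g (t : ℝ) : HasDerivAt (gFun ν ε) (GFun ν ε 0 t) t :=
  ((hasDerivAt_Psi hmom 0 t).neg).sub (hasDerivAt_quad ε t)

lemma hasDerivAt_G (i : ℕ) (t : ℝ) :
    HasDerivAt (GFun ν ε i) (GFun ν ε (i+1) t) t := by
  match i with
  | 0 =>
      have hq : HasDerivAt (fun t : ℝ => (ε:ℂ)^2 * (t:ℂ)) ((ε:ℂ)^2) t := by
        simpa using (hasDerivAt_coe t).const_mul ((ε:ℂ)^2)
      exact ((hasDerivAt_Psi hmom 1 t).neg).sub hq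
  | 1 =>
      have := ((hasDerivAt_Psi hmom 2 t).neg).sub (hasDerivAt_const t ((ε:ℂ)^2))
      convert this using 1
      · rfl
      · rfl
      · simp [GFun]
  | (j+2) =>
      exact (hasDerivAt_Psi hmom (j+3) t).neg

lemma contDiff_g : ContDiff ℝ ∞ (gFun ν ε) := by
  refine ((contDiff_Psi hmom 0).neg).sub ?_
  exact (contDiff_const.mul (contDiff_coe.pow 2)).div_const 2

lemma contDiff_f : ContDiff ℝ ∞ (fFun ν ε) :=
  Complex.contDiff_exp.comp (contDiff_g ε hmom)

lemma contDiff_G0 : ContDiff ℝ ∞ (GFun ν ε 0) := by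
  refine ((contDiff_Psi hmom 1).neg).sub ?_
  exact contDiff_const.mul contDiff_coe

lemma iteratedDeriv_G (j : ℕ) : iteratedDeriv j (GFun ν ε 0) = GFun ν ε j := by
  induction j with
  | zero => simp
  | succ k ih =>
      rw [iteratedDeriv_succ, ih]
      funext t
      exact (hasDerivAt_G ε hmom k t).deriv

lemma hasDerivAt_f (t : ℝ) :
    HasDerivAt (fFun ν ε) (fFun ν ε t * GFun ν ε 0 t) t :=
  (hasDerivAt_g ε hmom t).cexp

lemma deriv_f : deriv (fFun ν ε) = fun t => fFun ν ε t * GFun ν ε 0 t := by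
  funext t
  exact (hasDerivAt_f ε hmom t).deriv

lemma norm_f_le (t : ℝ) : ‖fFun ν ε t‖ ≤ Real.exp (-(ε^2 * t^2/2)) := by
  have hg : gFun ν ε t = -(Psi ν 0 t) - ((ε^2 * t^2/2 : ℝ) : ℂ) := by
    rw [gFun]; push_cast; ring
  have hre : (gFun ν ε t).re = -(Psi ν 0 t).re - ε^2 * t^2/2 := by
    rw [hg, Complex.sub_re, Complex.neg_re, Complex.ofReal_re]
  rw [fFun, Complex.norm_exp, hre]
  apply Real.exp_le_exp.mpr
  have := re_Psi0_nonneg hmom t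
  linarith

lemma norm_G_le (i : ℕ) :
    ∃ D : ℝ, 0 ≤ D ∧ ∀ t, ‖GFun ν ε i t‖ ≤ D * (1 + |t|)^2 := by
  have hsq : ∀ t : ℝ, (0:ℝ) < (1 + |t|)^2 := fun t => by positivity
  match i with
  | 0 =>
      obtain ⟨C, hC0, hC⟩ := norm_Psi_le hmom 1
      refine ⟨C + ε^2, by positivity, fun t => ?_⟩
      have h1 : ‖(ε:ℂ)^2 * (t:ℂ)‖ = ε^2 * |t| := by
        rw [norm_mul, norm_pow]
        simp [Complex.norm_real, abs_sq]
      calc ‖GFun ν ε 0 t‖ ≤ ‖Psi ν 1 t‖ + ‖(ε:ℂ)^2 * (t:ℂ)‖ := by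
            rw [show GFun ν ε 0 t = -(Psi ν 1 t) - (ε:ℂ)^2 * t from rfl]
            exact (norm_sub_le _ _).trans (by rw [norm_neg])
        _ ≤ C * (1 + |t|)^2 + ε^2 * (1 + |t|)^2 := by
            rw [h1]
            refine add_le_add (hC t) ?_
            have := (one_add_abs_sq_bounds t).1
            nlinarith [sq_nonneg ε]
        _ = (C + ε^2) * (1 + |t|)^2 := by ring
  | 1 =>
      obtain ⟨C, hC0, hC⟩ := norm_Psi_le hmom 2
      refine ⟨C + ε^2, by positivity, fun t => ?_⟩
      have h1 : ‖((ε:ℂ)^2 : ℂ)‖ = ε^2 := by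
        rw [norm_pow]; simp [Complex.norm_real, abs_sq]
      calc ‖GFun ν ε 1 t‖ ≤ ‖Psi ν 2 t‖ + ‖((ε:ℂ)^2 : ℂ)‖ := by
            rw [show GFun ν ε 1 t = -(Psi ν 2 t) - (ε:ℂ)^2 from rfl]
            exact (norm_sub_le _ _).trans (by rw [norm_neg])
        _ ≤ C * (1 + |t|)^2 + ε^2 * (1 + |t|)^2 := by
            rw [h1]
            refine add_le_add (hC t) ?_
            have := (one_add_abs_sq_bounds t).2.2
            nlinarith [sq_nonneg ε]
        _ = (C + ε^2) * (1 + |t|)^2 := by ring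
  | (j+2) =>
      obtain ⟨C, hC0, hC⟩ := norm_Psi_le hmom (j+3)
      refine ⟨C, hC0, fun t => ?_⟩
      rw [show GFun ν ε (j+2) t = -(Psi ν (j+3) t) from rfl, norm_neg]
      exact hC t

end CFGaux

namespace CFGaux

open scoped ContDiff

variable {ν : Measure ℝ}

lemma decay_f (ε : ℝ) (hmom : ∀ j : ℕ, 2 ≤ j → Integrable (fun u : ℝ => |u| ^ j) ν)
    (n : ℕ) :
    ∃ C : ℝ, 0 ≤ C ∧ ∀ t, ‖iteratedDeriv n (fFun ν ε) t‖ ≤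
      C * (1 + |t|)^(2*n) * Real.exp (-(ε^2 * t^2/2)) := by
  induction n using Nat.strong_induction_on with
  | _ n ih =>
    match n with
    | 0 =>
        refine ⟨1, zero_le_one, fun t => ?_⟩
        rw [iteratedDeriv_zero]
        simpa using norm_f_le ε hmom t
    | (m+1) =>
        have hDf : ∀ i : ℕ, ∃ D : ℝ, 0 ≤ D ∧ ∀ t, ‖GFun ν ε i t‖ ≤ D * (1 + |t|)^2 :=
          fun i => norm_G_le ε hmom i
        set Cf : ℕ → ℝ := fun i => if h : i < m+1 then (ih i h).choose else 0 with hCf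
        have hCf0 : ∀ i, i < m+1 → 0 ≤ Cf i ∧ ∀ t, ‖iteratedDeriv i (fFun ν ε) t‖ ≤
            Cf i * (1 + |t|)^(2*i) * Real.exp (-(ε^2 * t^2/2)) := by
          intro i hi
          rw [hCf]
          simp only [dif_pos hi]
          exact (ih i hi).choose_spec
        set Df : ℕ → ℝ := fun i => (hDf i).choose with hDfdef
        have hDf0 : ∀ i, 0 ≤ Df i ∧ ∀ t, ‖GFun ν ε i t‖ ≤ Df i * (1 + |t|)^2 := by
          intro i
          rw [hDfdef]
          exact (hDf i).choose_spec
        refine ⟨∑ i ∈ Finset.range (m+1), (m.choose i : ℝ) * Cf i * Df (m-i), ?_, fun t => ?_⟩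
        · refine Finset.sum_nonneg fun i hi => ?_
          have h1 := (hCf0 i (Finset.mem_range.mp hi)).1
          have h2 := (hDf0 (m-i)).1
          positivity
        · have h1t : (1:ℝ) ≤ 1 + |t| := by have := abs_nonneg t; linarith
          have hE0 : (0:ℝ) < Real.exp (-(ε^2 * t^2/2)) := Real.exp_pos _
          calc ‖iteratedDeriv (m+1) (fFun ν ε) t‖
              = ‖iteratedFDeriv ℝ m (fun t => fFun ν ε t * GFun ν ε 0 t) t‖ := by
                rw [iteratedDeriv_succ', deriv_f ε hmom,
                  norm_iteratedFDeriv_eq_norm_iteratedDeriv]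
            _ ≤ ∑ i ∈ Finset.range (m+1), (m.choose i : ℝ) *
                  ‖iteratedFDeriv ℝ i (fFun ν ε) t‖ *
                  ‖iteratedFDeriv ℝ (m-i) (GFun ν ε 0) t‖ :=
                norm_iteratedFDeriv_mul_le (contDiff_f ε hmom) (contDiff_G0 ε hmom) t
                  (mod_cast le_top)
            _ ≤ ∑ i ∈ Finset.range (m+1), ((m.choose i : ℝ) * Cf i * Df (m-i)) *
                  ((1 + |t|)^(2*(m+1)) * Real.exp (-(ε^2 * t^2/2))) := by
                refine Finset.sum_le_sum fun i hi => ?_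
                have him : i < m + 1 := Finset.mem_range.mp hi
                obtain ⟨hCi0, hCi⟩ := hCf0 i him
                obtain ⟨hDi0, hDi⟩ := hDf0 (m-i)
                have ha : ‖iteratedFDeriv ℝ i (fFun ν ε) t‖ ≤
                    Cf i * (1 + |t|)^(2*i) * Real.exp (-(ε^2 * t^2/2)) := by
                  rw [norm_iteratedFDeriv_eq_norm_iteratedDeriv]; exact hCi t
                have hb : ‖iteratedFDeriv ℝ (m-i) (GFun ν ε 0) t‖ ≤ Df (m-i) * (1 + |t|)^2 := by
                  rw [norm_iteratedFDeriv_eq_norm_iteratedDeriv, iteratedDeriv_G ε hmom]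
                  exact hDi t
                calc (m.choose i : ℝ) * ‖iteratedFDeriv ℝ i (fFun ν ε) t‖ *
                      ‖iteratedFDeriv ℝ (m-i) (GFun ν ε 0) t‖
                    ≤ (m.choose i : ℝ) * (Cf i * (1 + |t|)^(2*i) * Real.exp (-(ε^2 * t^2/2))) *
                      (Df (m-i) * (1 + |t|)^2) := by
                      have := mul_le_mul (mul_le_mul_of_nonneg_left ha
                        (by positivity : (0:ℝ) ≤ (m.choose i : ℝ))) hb (norm_nonneg _)
                        (by positivity)
                      exact this
                  _ = ((m.choose i : ℝ) * Cf i * Df (m-i)) *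
                      ((1 + |t|)^(2*i+2) * Real.exp (-(ε^2 * t^2/2))) := by ring
                  _ ≤ ((m.choose i : ℝ) * Cf i * Df (m-i)) *
                      ((1 + |t|)^(2*(m+1)) * Real.exp (-(ε^2 * t^2/2))) := by
                      have hpow : (1 + |t|)^(2*i+2) ≤ (1 + |t|)^(2*(m+1)) :=
                        pow_le_pow_right₀ h1t (by omega)
                      have hc0 : (0:ℝ) ≤ (m.choose i : ℝ) * Cf i * Df (m-i) := by positivity
                      have := mul_le_mul_of_nonneg_right hpow hE0.le
                      exact mul_le_mul_of_nonneg_left this hc0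
            _ = (∑ i ∈ Finset.range (m+1), (m.choose i : ℝ) * Cf i * Df (m-i)) *
                  (1 + |t|)^(2*(m+1)) * Real.exp (-(ε^2 * t^2/2)) := by
                rw [← Finset.sum_mul]
                ring

end CFGaux

namespace CFGaux

lemma poly_gauss (m : ℕ) {c : ℝ} (hc : 0 < c) :
    ∃ B : ℝ, ∀ x : ℝ, (1 + |x|)^m * Real.exp (-(c * x^2)) ≤ B := by
  set c' : ℝ := c / (2 * (m+1)) with hc'def
  have hc' : 0 < c' := by positivity
  refine ⟨(2 * (1 + 1/c'))^m, fun x => ?_⟩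
  have hx2 : (0:ℝ) ≤ x^2 := sq_nonneg x
  have key1 : 1 + x^2 ≤ (1 + 1/c') * Real.exp (c' * x^2) := by
    have e1 : c' * x^2 ≤ Real.exp (c' * x^2) := by
      have := Real.add_one_le_exp (c' * x^2)
      linarith
    have e2 : (1:ℝ) ≤ Real.exp (c' * x^2) := Real.one_le_exp (by positivity)
    have e3 : x^2 ≤ (1/c') * Real.exp (c' * x^2) := by
      rw [div_mul_eq_mul_div, le_div_iff₀ hc', one_mul]
      calc x^2 * c' = c' * x^2 := by ring
        _ ≤ Real.exp (c' * x^2) := e1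
    calc 1 + x^2 ≤ Real.exp (c' * x^2) + (1/c') * Real.exp (c' * x^2) := add_le_add e2 e3
      _ = (1 + 1/c') * Real.exp (c' * x^2) := by ring
  have key2 : 1 + |x| ≤ 2 * (1 + x^2) := by
    nlinarith [sq_nonneg (|x| - 1), _root_.sq_abs x]
  have key3 : (1 + |x|)^m ≤ (2 * (1 + 1/c'))^m * Real.exp ((m : ℝ) * (c' * x^2)) := by
    calc (1 + |x|)^m ≤ (2 * ((1 + 1/c') * Real.exp (c' * x^2)))^m := by
          refine pow_le_pow_left₀ (by positivity) ?_ m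
          calc 1 + |x| ≤ 2 * (1 + x^2) := key2
            _ ≤ 2 * ((1 + 1/c') * Real.exp (c' * x^2)) := by linarith [key1]
      _ = (2 * (1 + 1/c'))^m * Real.exp (c' * x^2)^m := by
          rw [show 2 * ((1 + 1/c') * Real.exp (c' * x^2)) =
            (2 * (1 + 1/c')) * Real.exp (c' * x^2) from by ring, mul_pow]
      _ = (2 * (1 + 1/c'))^m * Real.exp ((m : ℝ) * (c' * x^2)) := by
          rw [← Real.exp_nat_mul]
  have hmc : (m : ℝ) * c' ≤ c / 2 := by
    rw [hc'def, ← mul_div_assoc,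
      div_le_div_iff₀ (by positivity) (by norm_num : (0:ℝ) < 2)]
    have : (0:ℝ) ≤ (m:ℝ) := Nat.cast_nonneg m
    nlinarith
  calc (1 + |x|)^m * Real.exp (-(c * x^2))
      ≤ (2 * (1 + 1/c'))^m * Real.exp ((m : ℝ) * (c' * x^2)) * Real.exp (-(c * x^2)) := by
        exact mul_le_mul_of_nonneg_right key3 (Real.exp_pos _).le
    _ = (2 * (1 + 1/c'))^m * Real.exp ((m : ℝ) * (c' * x^2) + -(c * x^2)) := by
        rw [Real.exp_add]; ring
    _ ≤ (2 * (1 + 1/c'))^m * 1 := by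
        refine mul_le_mul_of_nonneg_left ?_ (by positivity)
        rw [show (1:ℝ) = Real.exp 0 from (Real.exp_zero).symm]
        refine Real.exp_le_exp.mpr ?_
        have h1 : (m : ℝ) * (c' * x^2) ≤ (c/2) * x^2 := by
          rw [← mul_assoc]
          exact mul_le_mul_of_nonneg_right hmc hx2
        nlinarith
    _ = (2 * (1 + 1/c'))^m := mul_one _

end CFGaux

/-- Let ξ be infinitely divisible with characteristic exponent
Ψ(t) = ∫ (1 + itu - e^{itu}) ν(du), where ν has finite moments of all orders ≥ 2,
and let Z ~ N(0,ε²) be independent of ξ.  Then the characteristic function of ξ + Z,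
namely t ↦ exp(-Ψ(t) - ε²t²/2), is a Schwartz function. -/
theorem char_fun_convolved_gaussian_schwartz
    (ν : Measure ℝ) (hmom : ∀ j : ℕ, 2 ≤ j → Integrable (fun u : ℝ => |u| ^ j) ν)
    (ε : ℝ) (hε : 0 < ε)
    (Ψ : ℝ → ℂ)
    (hΨ : ∀ t : ℝ, Ψ t =
      ∫ u : ℝ, (1 + Complex.I * t * u - Complex.exp (Complex.I * t * u)) ∂ν) :
    ∃ φ : SchwartzMap ℝ ℂ,
      ∀ t : ℝ, φ t = Complex.exp (-(Ψ t) - (ε : ℂ) ^ 2 * (t : ℂ) ^ 2 / 2) := by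
  classical
  refine ⟨⟨CFGaux.fFun ν ε, CFGaux.contDiff_f ε hmom, ?_⟩, fun t => ?_⟩
  · intro k n
    obtain ⟨C, hC0, hC⟩ := CFGaux.decay_f ε hmom n
    obtain ⟨B, hB⟩ := CFGaux.poly_gauss (k + 2*n) (c := ε^2/2) (by positivity)
    refine ⟨C * B, fun x => ?_⟩
    have h1x : (1:ℝ) ≤ 1 + |x| := by have := abs_nonneg x; linarith
    have hEeq : Real.exp (-(ε^2 * x^2/2)) = Real.exp (-(ε^2/2 * x^2)) := by ring_nf
    calc ‖x‖^k * ‖iteratedFDeriv ℝ n (CFGaux.fFun ν ε) x‖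
        = |x|^k * ‖iteratedDeriv n (CFGaux.fFun ν ε) x‖ := by
          rw [norm_iteratedFDeriv_eq_norm_iteratedDeriv, Real.norm_eq_abs]
      _ ≤ (1 + |x|)^k * (C * (1 + |x|)^(2*n) * Real.exp (-(ε^2 * x^2/2))) := by
          refine mul_le_mul (pow_le_pow_left₀ (abs_nonneg x) (by linarith) k) (hC x)
            (norm_nonneg _) (by positivity)
      _ = C * ((1 + |x|)^(k + 2*n) * Real.exp (-(ε^2/2 * x^2))) := by
          rw [pow_add, hEeq]; ring
      _ ≤ C * B := mul_le_mul_of_nonneg_left (hB x) hC0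
  · show CFGaux.fFun ν ε t = _
    rw [CFGaux.fFun, CFGaux.gFun, hΨ]
    have hPsi : CFGaux.Psi ν 0 t =
        ∫ u : ℝ, (1 + Complex.I * t * u - Complex.exp (Complex.I * t * u)) ∂ν := rfl
    rw [hPsi]
end
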